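/- Let G = SL(3, ℝ), the group of 3×3 real matrices of determinant 1. Let P = {A ∈ G : A_{ij} = 0 whenever i < j} (the lower triangular matrices in G) and Q = {A ∈ G : A_{12} = A_{13} = 0}. Then P and Q are subgroups of G with P ⊆ Q, and for every subgroup R of G with P ⊆ R ⊆ Q one has R = P or R = Q. -/

import Mathlib

open Matrix

namespace SL3IntermediateAux

abbrev SL3 := Matrix.SpecialLinearGroup (Fin 3) ℝ

def P : Subgroup SL3 where
  carrier := {A | (A : Matrix (Fin 3) (Fin 3) ℝ) 0 1 = 0 ∧
    (A : Matrix (Fin 3) (Fin 3) ℝ) 0 2 = 0 ∧ (A : Matrix (Fin 3) (Fin 3) ℝ) 1 2 = 0}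
  one_mem' := by simp
  mul_mem' := by
    rintro A B ⟨hA1, hA2, hA3⟩ ⟨hB1, hB2, hB3⟩
    refine ⟨?_, ?_, ?_⟩ <;>
      simp [Matrix.SpecialLinearGroup.coe_mul, Matrix.mul_apply, Fin.sum_univ_three,
        hA1, hA2, hA3, hB1, hB2, hB3]
  inv_mem' := by
    rintro A ⟨hA1, hA2, hA3⟩
    refine ⟨?_, ?_, ?_⟩ <;>
      simp [Matrix.SpecialLinearGroup.coe_inv, Matrix.adjugate_fin_three, hA1, hA2, hA3]

def Q : Subgroup SL3 where
  carrier := {A | (A : Matrix (Fin 3) (Fin 3) ℝ) 0 1 = 0 ∧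
    (A : Matrix (Fin 3) (Fin 3) ℝ) 0 2 = 0}
  one_mem' := by simp
  mul_mem' := by
    rintro A B ⟨hA1, hA2⟩ ⟨hB1, hB2⟩
    refine ⟨?_, ?_⟩ <;>
      simp [Matrix.SpecialLinearGroup.coe_mul, Matrix.mul_apply, Fin.sum_univ_three,
        hA1, hA2, hB1, hB2]
  inv_mem' := by
    rintro A ⟨hA1, hA2⟩
    refine ⟨?_, ?_⟩ <;>
      simp [Matrix.SpecialLinearGroup.coe_inv, Matrix.adjugate_fin_three, hA1, hA2]

def w : SL3 := ⟨!![1,0,0; 0,0,-1; 0,1,0], by norm_num [Matrix.det_fin_three, Matrix.cons_val_two, Matrix.vecHead, Matrix.vecTail]⟩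

lemma bruhat (q : SL3) (h01 : (q : Matrix (Fin 3) (Fin 3) ℝ) 0 1 = 0)
    (h02 : (q : Matrix (Fin 3) (Fin 3) ℝ) 0 2 = 0)
    (h12 : (q : Matrix (Fin 3) (Fin 3) ℝ) 1 2 ≠ 0) :
    ∃ p₁ p₂ : SL3, p₁ ∈ P ∧ p₂ ∈ P ∧ q = p₁ * w * p₂ := by
  set a := (q : Matrix (Fin 3) (Fin 3) ℝ) 0 0 with ha'
  set b := (q : Matrix (Fin 3) (Fin 3) ℝ) 1 0 with hb'
  set e := (q : Matrix (Fin 3) (Fin 3) ℝ) 1 1 with he'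
  set c := (q : Matrix (Fin 3) (Fin 3) ℝ) 1 2 with hc'
  set f := (q : Matrix (Fin 3) (Fin 3) ℝ) 2 0 with hf'
  set g := (q : Matrix (Fin 3) (Fin 3) ℝ) 2 1 with hg'
  set h := (q : Matrix (Fin 3) (Fin 3) ℝ) 2 2 with hh'
  have hdet : a * e * h - a * c * g = 1 := by
    have hq := q.property
    rw [Matrix.det_fin_three] at hq
    rw [h01, h02] at hq
    linear_combination hq
  have ha : a ≠ 0 := by
    intro h0; rw [h0] at hdet; norm_num at hdet
  have hc : c ≠ 0 := h12
  refine ⟨⟨!![1,0,0; 0,1,0; (f - h*b/c)/a, h/c, a*e*h - a*c*g], ?_⟩,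
          ⟨!![a,0,0; 0, -1/(a*c), 0; -b,-e,-c], ?_⟩, ?_, ?_, ?_⟩
  · rw [Matrix.det_fin_three]
    norm_num [Matrix.cons_val_two, Matrix.vecHead, Matrix.vecTail]
    linear_combination hdet
  · rw [Matrix.det_fin_three]
    simp [Matrix.cons_val_two, Matrix.vecHead, Matrix.vecTail]
    field_simp
  · exact ⟨by norm_num [Matrix.cons_val_two, Matrix.vecHead, Matrix.vecTail], by norm_num [Matrix.cons_val_two, Matrix.vecHead, Matrix.vecTail], by norm_num [Matrix.cons_val_two, Matrix.vecHead, Matrix.vecTail]⟩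
  · exact ⟨by norm_num [Matrix.cons_val_two, Matrix.vecHead, Matrix.vecTail], by norm_num [Matrix.cons_val_two, Matrix.vecHead, Matrix.vecTail], by norm_num [Matrix.cons_val_two, Matrix.vecHead, Matrix.vecTail]⟩
  · ext i j
    erw [Matrix.SpecialLinearGroup.coe_mul, Matrix.SpecialLinearGroup.coe_mul]
    fin_cases i <;> fin_cases j <;>
      simp [w, Matrix.SpecialLinearGroup.coe_mul, Matrix.mul_apply, Fin.sum_univ_three,
        h01, h02, Matrix.cons_val_two, Matrix.vecHead, Matrix.vecTail, ← ha', ← hb', ← he', ← hc', ← hf', ← hg', ← hh'] <;>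
      field_simp <;> ring

end SL3IntermediateAux

/-- In `G = SL(3, ℝ)`, the lower triangular subgroup `P` and the subgroup
`Q = {A : A₁₂ = A₁₃ = 0}` satisfy `P ⊆ Q`, and the inclusion `P ⊆ Q` has no proper
intermediate subgroups. -/
theorem sl3_no_proper_intermediate_subgroup :
    ∃ P Q : Subgroup (Matrix.SpecialLinearGroup (Fin 3) ℝ),
      (P : Set (Matrix.SpecialLinearGroup (Fin 3) ℝ)) =
        {A : Matrix.SpecialLinearGroup (Fin 3) ℝ |
          ∀ i j : Fin 3, i < j → (A : Matrix (Fin 3) (Fin 3) ℝ) i j = 0} ∧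
      (Q : Set (Matrix.SpecialLinearGroup (Fin 3) ℝ)) =
        {A : Matrix.SpecialLinearGroup (Fin 3) ℝ |
          (A : Matrix (Fin 3) (Fin 3) ℝ) 0 1 = 0 ∧
          (A : Matrix (Fin 3) (Fin 3) ℝ) 0 2 = 0} ∧
      P ≤ Q ∧
      ∀ R : Subgroup (Matrix.SpecialLinearGroup (Fin 3) ℝ),
        P ≤ R → R ≤ Q → R = P ∨ R = Q := by
  classical
  refine ⟨SL3IntermediateAux.P, SL3IntermediateAux.Q, ?_, rfl, ?_, ?_⟩
  · ext A
    constructor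
    · rintro ⟨h1, h2, h3⟩ i j hij
      fin_cases i <;> fin_cases j <;> first
        | exact absurd hij (by decide)
        | assumption
    · intro hA
      exact ⟨hA 0 1 (by decide), hA 0 2 (by decide), hA 1 2 (by decide)⟩
  · rintro A ⟨h1, h2, _⟩
    exact ⟨h1, h2⟩
  · intro R hPR hRQ
    by_cases hRP : R ≤ SL3IntermediateAux.P
    · exact Or.inl (le_antisymm hRP hPR)
    · right
      rw [SetLike.not_le_iff_exists] at hRP
      obtain ⟨g, hgR, hgP⟩ := hRP
      obtain ⟨hg1, hg2⟩ := hRQ hgR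
      have hg3 : (g : Matrix (Fin 3) (Fin 3) ℝ) 1 2 ≠ 0 := by
        intro h0
        exact hgP ⟨hg1, hg2, h0⟩
      obtain ⟨p₁, p₂, hp₁, hp₂, hg⟩ := SL3IntermediateAux.bruhat g hg1 hg2 hg3
      have hwR : SL3IntermediateAux.w ∈ R := by
        have : SL3IntermediateAux.w = p₁⁻¹ * g * p₂⁻¹ := by rw [hg]; group
        rw [this]
        exact R.mul_mem (R.mul_mem (R.inv_mem (hPR hp₁)) hgR) (R.inv_mem (hPR hp₂))
      apply le_antisymm hRQ
      intro q hq
      obtain ⟨hq1, hq2⟩ := hq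
      by_cases hq3 : (q : Matrix (Fin 3) (Fin 3) ℝ) 1 2 = 0
      · exact hPR ⟨hq1, hq2, hq3⟩
      · obtain ⟨p₁', p₂', hp₁', hp₂', hqeq⟩ := SL3IntermediateAux.bruhat q hq1 hq2 hq3
        rw [hqeq]
        exact R.mul_mem (R.mul_mem (hPR hp₁') hwR) (hPR hp₂')
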